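/- There exists a continuous function f : ℂ → ℝ with f ∈ L²(ℂ), whose partial derivatives exist outside a set of Lebesgue measure zero, such that the (almost-everywhere defined) functions Zf and Z̄f belong to L²(ℂ), and yet Σ_{k∈ℤ²} sup_{z ∈ k+[0,1]²} |f(z)| = +∞ (i.e., f ∉ W(C₀, ℓ¹)). -/

import Mathlib

open MeasureTheory Complex
open scoped ENNReal NNReal
noncomputable section

/-- ∂/∂x -/
def pdx (f : ℂ → ℂ) (z : ℂ) : ℂ := fderiv ℝ f z 1
/-- ∂/∂y -/
def pdy (f : ℂ → ℂ) (z : ℂ) : ℂ := fderiv ℝ f z Complex.I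
/-- ∂/∂z := ∂/∂x − i ∂/∂y -/
def pdz (f : ℂ → ℂ) (z : ℂ) : ℂ := pdx f z - Complex.I * pdy f z
/-- ∂/∂z̄ := ∂/∂x + i ∂/∂y -/
def pdzbar (f : ℂ → ℂ) (z : ℂ) : ℂ := pdx f z + Complex.I * pdy f z
/-- Zf(z) = ∂f/∂z + (1/2) z̄ f(z) -/
def Zop (f : ℂ → ℂ) (z : ℂ) : ℂ := pdz f z + (1/2 : ℂ) * (starRingEnd ℂ) z * f z
/-- Z̄f(z) = ∂f/∂z̄ − (1/2) z f(z) -/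
def Zbarop (f : ℂ → ℂ) (z : ℂ) : ℂ := pdzbar f z - (1/2 : ℂ) * z * f z

/-- normalized Hermite functions -/
def hermiteFn (k : ℕ) (x : ℝ) : ℝ :=
  ((2:ℝ)^k * Real.sqrt Real.pi * (Nat.factorial k : ℝ)) ^ (-(1/2 : ℝ)) * (-1:ℝ)^k *
    Real.exp (x^2/2) * iteratedDeriv k (fun t => Real.exp (-t^2)) x

/-- special Hermite functions φ_{m,n} -/
def sphi (m n : ℕ) (z : ℂ) : ℂ :=
  (((2 * Real.pi) ^ (-(1/2:ℝ)) : ℝ) : ℂ) *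
    ∫ ξ : ℝ, Complex.exp (Complex.I * ξ * z.re) *
      (hermiteFn m (ξ + z.im/2) : ℂ) * (hermiteFn n (ξ - z.im/2) : ℂ)

/-- special Hermite operator L -/
def Lop (f : ℂ → ℂ) (z : ℂ) : ℂ :=
  -(pdx (pdx f) z + pdy (pdy f) z) + (1/4 : ℂ) * ((‖z‖^2 : ℝ) : ℂ) * f z
    - Complex.I * ((z.re : ℂ) * pdy f z - (z.im : ℂ) * pdx f z)

/-- Gaussian integer associated to k ∈ ℤ² -/
def gint (k : ℤ × ℤ) : ℂ := (k.1 : ℂ) + (k.2 : ℂ) * Complex.I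

/-- twisted translation -/
def Tt (m n : ℤ) (f : ℂ → ℂ) (z : ℂ) : ℂ :=
  Complex.exp (2 * Real.pi * Complex.I * ((n : ℂ) * z.re - (m : ℂ) * z.im)) *
    f (z - ((m : ℂ) + (n : ℂ) * Complex.I))

/-- twisted Zak transform -/
def Zak (f : ℂ → ℂ) (z w : ℂ) : ℂ :=
  ∑' k : ℤ × ℤ, f (z - gint k) *
    Complex.exp (2 * Real.pi * Complex.I * (((w * (starRingEnd ℂ) (gint k)).im : ℝ) : ℂ))

/-- the cell k + [0,1]² -/
def cell (k : ℤ × ℤ) : Set ℂ :=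
  {z : ℂ | z.re ∈ Set.Icc (k.1 : ℝ) (k.1 + 1) ∧ z.im ∈ Set.Icc (k.2 : ℝ) (k.2 + 1)}

/-- amalgam local sup norm -/
def amalgamNorm (f : ℂ → ℂ) (k : ℤ × ℤ) : ℝ := sSup ((fun z => ‖f z‖) '' cell k)

/-- unit square Q = [0,1) × [0,1) -/
def Qset : Set ℂ := {z : ℂ | z.re ∈ Set.Ico (0:ℝ) 1 ∧ z.im ∈ Set.Ico (0:ℝ) 1}

/-- frame condition with bounds A, B on a sub-collection S of twisted translates of g -/
def IsTwistedFrameOn (g : ℂ → ℂ) (S : Set (ℤ × ℤ)) (A B : ℝ) : Prop :=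
  ∀ f : ℂ → ℂ, MemLp f 2 (volume : Measure ℂ) →
    A * ∫ z : ℂ, ‖f z‖^2 ≤
        (∑' k : S, ‖∫ z : ℂ, f z * (starRingEnd ℂ) (Tt (k : ℤ × ℤ).1 (k : ℤ × ℤ).2 g z)‖^2) ∧
    (∑' k : S, ‖∫ z : ℂ, f z * (starRingEnd ℂ) (Tt (k : ℤ × ℤ).1 (k : ℤ × ℤ).2 g z)‖^2) ≤
        B * ∫ z : ℂ, ‖f z‖^2

/-- the twisted Gabor system of g is a frame for L²(ℂ) -/
def IsTwistedFrame (g : ℂ → ℂ) : Prop :=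
  ∃ A B : ℝ, 0 < A ∧ 0 < B ∧ IsTwistedFrameOn g Set.univ A B

/-- exact frame: a frame that ceases to be a frame upon deletion of any single element -/
def IsExactTwistedFrame (g : ℂ → ℂ) : Prop :=
  IsTwistedFrame g ∧
    ∀ k₀ : ℤ × ℤ, ¬ ∃ A B : ℝ, 0 < A ∧ 0 < B ∧ IsTwistedFrameOn g ({k₀}ᶜ) A B


open Metric Set Filter MeasureTheory
open scoped ENNReal NNReal
noncomputable section
namespace S14

def φ : ContDiffBump (0 : ℂ) := ⟨1/2, 1, by norm_num, by norm_num⟩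

def a (n : ℕ) : ℝ := 1 / (n + 1)
def s (n : ℕ) : ℝ := 4 * 2 ^ n
def c (n : ℕ) : ℂ := (((n : ℝ) + 1/2 : ℝ) : ℂ) + Complex.I / 2
def gr (n : ℕ) (z : ℂ) : ℝ := a n * φ (s n • (z - c n))
def g (n : ℕ) (z : ℂ) : ℂ := ((gr n z : ℝ) : ℂ)
def F (z : ℂ) : ℂ := ((∑' n, gr n z : ℝ) : ℂ)

lemma a_pos (n : ℕ) : 0 < a n := by rw [a]; positivity
lemma a_le_one (n : ℕ) : a n ≤ 1 := by
  rw [a, div_le_one (by positivity)]; linarith [Nat.cast_nonneg (α := ℝ) n]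
lemma s_pos (n : ℕ) : 0 < s n := by rw [s]; positivity
lemma four_le_s (n : ℕ) : 4 ≤ s n := by
  have : (1:ℝ) ≤ 2 ^ n := one_le_pow₀ (by norm_num)
  rw [s]; nlinarith
lemma s_inv_le (n : ℕ) : (s n)⁻¹ ≤ 4⁻¹ := by
  exact inv_anti₀ (by norm_num) (four_le_s n)
lemma add_two_le_s (n : ℕ) : (n : ℝ) + 2 ≤ s n := by
  have h := Nat.lt_two_pow_self (n := n)
  have : (n:ℝ) < 2 ^ n := by exact_mod_cast h
  have h1 : (1:ℝ) ≤ 2 ^ n := one_le_pow₀ (by norm_num)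
  rw [s]; nlinarith

lemma phi0 : φ 0 = 1 := φ.one_of_mem_closedBall (mem_closedBall_self (by norm_num [φ]))

lemma gr_nonneg (n : ℕ) (z : ℂ) : 0 ≤ gr n z := mul_nonneg (a_pos n).le (φ.nonneg' _)
lemma gr_le (n : ℕ) (z : ℂ) : gr n z ≤ a n := by
  have := φ.le_one (x := s n • (z - c n))
  calc gr n z ≤ a n * 1 := mul_le_mul_of_nonneg_left this (a_pos n).le
  _ = a n := mul_one _

lemma gr_zero_of_far {n : ℕ} {z : ℂ} (h : (s n)⁻¹ ≤ dist z (c n)) : gr n z = 0 := by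
  have : φ (s n • (z - c n)) = 0 := by
    apply Function.notMem_support.mp
    rw [φ.support_eq]
    intro hm
    rw [mem_ball, dist_zero_right, norm_smul, Real.norm_eq_abs,
      abs_of_pos (s_pos n)] at hm
    have : dist z (c n) < (s n)⁻¹ := by
      rw [dist_eq_norm]
      have := s_pos n
      calc ‖z - c n‖ = (s n)⁻¹ * (s n * ‖z - c n‖) := by field_simp
      _ < (s n)⁻¹ * 1 := by
          exact mul_lt_mul_of_pos_left (by simpa [φ] using hm) (by positivity)
      _ = (s n)⁻¹ := mul_one _
    linarith
  rw [gr, this, mul_zero]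

lemma dist_c {m n : ℕ} (h : m ≠ n) : 1 ≤ dist (c m) (c n) := by
  have : c m - c n = (((m:ℝ) - n : ℝ) : ℂ) := by rw [c, c]; push_cast; ring
  rw [dist_eq_norm, this, Complex.norm_real, Real.norm_eq_abs]
  have h1 : (1:ℤ) ≤ |(m:ℤ) - (n:ℤ)| := Int.one_le_abs (sub_ne_zero.mpr (by exact_mod_cast h))
  exact_mod_cast h1
open Metric Set Filter

/-! ### locality and smoothness -/

lemma gr_eventually_zero {n : ℕ} {z : ℂ} (h : z ∉ closedBall (c n) (s n)⁻¹) :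
    gr n =ᶠ[nhds z] 0 := by
  have hz : (s n)⁻¹ < dist z (c n) := by
    simpa [mem_closedBall, not_le] using h
  have hopen : IsOpen {w : ℂ | (s n)⁻¹ < dist w (c n)} :=
    isOpen_lt continuous_const (continuous_id.dist continuous_const)
  filter_upwards [hopen.mem_nhds hz] with w hw
  exact gr_zero_of_far (le_of_lt hw)

lemma exists_local (z₀ : ℂ) : ∃ n₀, ∀ z, dist z z₀ < 8⁻¹ → ∀ n, n ≠ n₀ → gr n z = 0 := by
  by_cases h : ∃ m, dist z₀ (c m) < 3/8
  · obtain ⟨m, hm⟩ := h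
    refine ⟨m, fun z hz n hn => ?_⟩
    apply gr_zero_of_far
    by_contra hc
    push_neg at hc
    have h1 : dist z (c n) < 4⁻¹ := lt_of_lt_of_le hc (s_inv_le n)
    have h2 : dist z₀ (c n) < 3/8 := by
      calc dist z₀ (c n) ≤ dist z₀ z + dist z (c n) := dist_triangle _ _ _
      _ < 8⁻¹ + 4⁻¹ := by rw [dist_comm z₀ z]; exact add_lt_add hz h1
      _ = 3/8 := by norm_num
    have hd : dist (c m) (c n) < 1 := by
      calc dist (c m) (c n) ≤ dist (c m) z₀ + dist z₀ (c n) := dist_triangle _ _ _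
      _ < 3/8 + 3/8 := by rw [dist_comm (c m) z₀]; exact add_lt_add hm h2
      _ < 1 := by norm_num
    exact absurd (dist_c (Ne.symm hn)) (not_le.mpr hd)
  · push_neg at h
    refine ⟨0, fun z hz n _ => ?_⟩
    apply gr_zero_of_far
    by_contra hc
    push_neg at hc
    have h1 : dist z (c n) < 4⁻¹ := lt_of_lt_of_le hc (s_inv_le n)
    have h2 : dist z₀ (c n) < 3/8 := by
      calc dist z₀ (c n) ≤ dist z₀ z + dist z (c n) := dist_triangle _ _ _
      _ < 8⁻¹ + 4⁻¹ := by rw [dist_comm z₀ z]; exact add_lt_add hz h1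
      _ = 3/8 := by norm_num
    exact absurd (h n) (not_le.mpr h2)

lemma F_loc (z₀ : ℂ) : ∃ n₀, F =ᶠ[nhds z₀] g n₀ := by
  obtain ⟨n₀, h⟩ := exists_local z₀
  refine ⟨n₀, eventually_of_mem (ball_mem_nhds z₀ (by norm_num : (0:ℝ) < 8⁻¹)) ?_⟩
  intro z hz
  rw [F, g, tsum_eq_single n₀ (fun n hn => h z (mem_ball.mp hz) n hn)]

lemma g_contDiff (n : ℕ) : ContDiff ℝ 2 (g n) := by
  apply Complex.ofRealCLM.contDiff.comp
  apply ContDiff.mul contDiff_const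
  exact (φ.contDiff).comp ((contDiff_id.sub contDiff_const).const_smul (s n))

def Cb : ℝ := ⨆ w : ℂ, ‖fderiv ℝ (⇑φ) w‖

lemma phi_fderiv_bdd : BddAbove (Set.range fun w : ℂ => ‖fderiv ℝ (⇑φ) w‖) := by
  have h2 : HasCompactSupport (fderiv ℝ (⇑φ)) := φ.hasCompactSupport.fderiv (𝕜 := ℝ)
  have h3 : Continuous (fderiv ℝ (⇑φ)) :=
    ((φ.contDiff (n := 2)).continuous_fderiv two_ne_zero)
  obtain ⟨C0, hC0⟩ := h2.exists_bound_of_continuous h3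
  exact ⟨C0, by rintro y ⟨w, rfl⟩; exact hC0 w⟩

lemma fderiv_phi_le (w : ℂ) : ‖fderiv ℝ (⇑φ) w‖ ≤ Cb := le_ciSup phi_fderiv_bdd w

lemma Cb_nonneg : 0 ≤ Cb := le_trans (norm_nonneg _) (fderiv_phi_le 0)

lemma g_hasFDerivAt (n : ℕ) (z : ℂ) :
    HasFDerivAt (g n)
      (Complex.ofRealCLM.comp ((a n) • ((fderiv ℝ (⇑φ) (s n • (z - c n))).comp
        (s n • (ContinuousLinearMap.id ℝ ℂ))))) z := by
  apply Complex.ofRealCLM.hasFDerivAt.comp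
  have h1 : HasFDerivAt (fun z : ℂ => s n • (z - c n)) (s n • ContinuousLinearMap.id ℝ ℂ) z :=
    ((hasFDerivAt_id z).sub_const (c n)).const_smul (s n)
  have h2 : HasFDerivAt (⇑φ) (fderiv ℝ (⇑φ) (s n • (z - c n))) (s n • (z - c n)) :=
    (((φ.contDiff (n := 1)).differentiable one_ne_zero) _).hasFDerivAt
  exact (h2.comp z h1).const_mul (a n)

lemma g_fderiv_apply (n : ℕ) (z v : ℂ) :
    ‖fderiv ℝ (g n) z v‖ ≤ Cb * (a n * s n) * ‖v‖ := by
  rw [(g_hasFDerivAt n z).fderiv]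
  simp only [ContinuousLinearMap.coe_comp', Function.comp_apply,
    ContinuousLinearMap.coe_smul', Pi.smul_apply, Complex.ofRealCLM_apply,
    ContinuousLinearMap.coe_id', id_eq, Complex.norm_real]
  rw [smul_eq_mul, Real.norm_eq_abs, abs_mul, abs_of_pos (a_pos n)]
  have h1 : |(fderiv ℝ (⇑φ) (s n • (z - c n))) (s n • v)| ≤ Cb * (s n * ‖v‖) := by
    calc |(fderiv ℝ (⇑φ) (s n • (z - c n))) (s n • v)|
        ≤ ‖fderiv ℝ (⇑φ) (s n • (z - c n))‖ * ‖s n • v‖ :=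
          (fderiv ℝ (⇑φ) (s n • (z - c n))).le_opNorm _
      _ ≤ Cb * ‖s n • v‖ := by
          apply mul_le_mul_of_nonneg_right (fderiv_phi_le _) (norm_nonneg _)
      _ = Cb * (s n * ‖v‖) := by
          rw [norm_smul, Real.norm_eq_abs, abs_of_pos (s_pos n)]
  calc a n * |(fderiv ℝ (⇑φ) (s n • (z - c n))) (s n • v)| ≤ a n * (Cb * (s n * ‖v‖)) :=
        mul_le_mul_of_nonneg_left h1 (a_pos n).le
    _ = Cb * (a n * s n) * ‖v‖ := by ring

lemma g_eventually_zero {n : ℕ} {z : ℂ} (h : z ∉ closedBall (c n) (s n)⁻¹) :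
    g n =ᶠ[nhds z] 0 :=
  (gr_eventually_zero h).mono fun w hw => by
    simp only [Pi.zero_apply] at hw ⊢; rw [g, hw, Complex.ofReal_zero]

lemma F_continuous : Continuous F := by
  rw [continuous_iff_continuousAt]
  intro z₀
  obtain ⟨n₀, h⟩ := F_loc z₀
  exact ((g_contDiff n₀).continuous.continuousAt).congr h.symm

lemma F_differentiable (z : ℂ) : DifferentiableAt ℝ F z := by
  obtain ⟨n₀, h⟩ := F_loc z
  exact (((g_contDiff n₀).differentiable two_ne_zero) z).congr_of_eventuallyEq h

lemma F_norm_g (z : ℂ) : ∃ n, F z = g n z ∧ fderiv ℝ F z = fderiv ℝ (g n) z ∧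
    F =ᶠ[nhds z] g n := by
  obtain ⟨n₀, h⟩ := F_loc z
  exact ⟨n₀, h.eq_of_nhds, h.fderiv_eq, h⟩

lemma g_norm_le (n : ℕ) (z : ℂ) : ‖g n z‖ ≤ a n := by
  rw [g, Complex.norm_real, Real.norm_eq_abs, _root_.abs_of_nonneg (gr_nonneg n z)]
  exact gr_le n z

lemma F_norm_le_one (z : ℂ) : ‖F z‖ ≤ 1 := by
  obtain ⟨n, hF, -, -⟩ := F_norm_g z
  rw [hF]
  exact le_trans (g_norm_le n z) (a_le_one n)

/-! ### L² membership -/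


lemma nnnorm_sq_le {x : ℂ} {b : ℝ} (hx : ‖x‖ ≤ b) :
    (‖x‖₊ : ℝ≥0∞) ^ (2:ℝ) ≤ ENNReal.ofReal (b ^ 2) := by
  rw [← enorm_eq_nnnorm, ← ofReal_norm,
    ENNReal.ofReal_rpow_of_nonneg (norm_nonneg x) (by norm_num)]
  apply ENNReal.ofReal_le_ofReal
  rw [← Real.rpow_natCast b 2]
  push_cast
  exact Real.rpow_le_rpow (norm_nonneg x) hx (by norm_num)

lemma memL2' (h : ℂ → ℂ) (hm : AEStronglyMeasurable h (volume : Measure ℂ)) (b : ℕ → ℝ)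
    (hb : ∀ z, ∃ n, ‖h z‖ ≤ (closedBall (c n) ((s n)⁻¹)).indicator (fun _ => b n) z)
    (hsum : Summable (fun n => (b n)^2 * ((s n)⁻¹)^2)) :
    MemLp h 2 (volume : Measure ℂ) := by
  refine ⟨hm, ?_⟩
  rw [eLpNorm_eq_lintegral_rpow_enorm_toReal (by norm_num) (by norm_num)]
  apply ENNReal.rpow_lt_top_of_nonneg (by positivity)
  have key : ∀ z, (‖h z‖₊ : ℝ≥0∞) ^ ((2:ℝ≥0∞).toReal) ≤
      ∑' n, (closedBall (c n) ((s n)⁻¹)).indicator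
        (fun _ => ENNReal.ofReal ((b n)^2)) z := by
    intro z
    obtain ⟨n, hn⟩ := hb z
    refine le_trans ?_ (ENNReal.le_tsum n)
    by_cases hz : z ∈ closedBall (c n) ((s n)⁻¹)
    · rw [Set.indicator_of_mem hz] at hn ⊢
      simpa using nnnorm_sq_le hn
    · rw [Set.indicator_of_notMem hz] at hn
      have : h z = 0 := norm_le_zero_iff.mp hn
      simp [this]
  have hne : (∫⁻ z, (‖h z‖₊ : ℝ≥0∞) ^ ((2:ℝ≥0∞).toReal) ∂(volume : Measure ℂ)) ≤
      ∑' n, ENNReal.ofReal ((b n)^2) * volume (closedBall (c n) ((s n)⁻¹)) := by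
    calc _ ≤ ∫⁻ z, ∑' n, (closedBall (c n) ((s n)⁻¹)).indicator
          (fun _ => ENNReal.ofReal ((b n)^2)) z ∂(volume : Measure ℂ) := lintegral_mono key
    _ = ∑' n, ∫⁻ z, (closedBall (c n) ((s n)⁻¹)).indicator
          (fun _ => ENNReal.ofReal ((b n)^2)) z ∂(volume : Measure ℂ) :=
        lintegral_tsum (fun n =>
          (measurable_const.indicator measurableSet_closedBall).aemeasurable)
    _ = _ := by
        congr 1
        ext n
        rw [lintegral_indicator measurableSet_closedBall]
        simp
  apply ne_top_of_le_ne_top _ hne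
  have hvol : ∀ n : ℕ, volume (closedBall (c n) ((s n)⁻¹)) ≤
      ENNReal.ofReal (((s n)⁻¹)^2 * 4) := by
    intro n
    rw [Complex.volume_closedBall]
    calc ENNReal.ofReal ((s n)⁻¹) ^ 2 * (NNReal.pi : ℝ≥0∞)
        ≤ ENNReal.ofReal ((s n)⁻¹) ^ 2 * ENNReal.ofReal 4 := by
          gcongr
          have h4 : NNReal.pi ≤ (4:ℝ≥0) := by
            rw [← NNReal.coe_le_coe, NNReal.coe_real_pi]; norm_num [Real.pi_le_four]
          exact_mod_cast ENNReal.coe_le_coe.mpr h4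
      _ = ENNReal.ofReal (((s n)⁻¹)^2 * 4) := by
          rw [← ENNReal.ofReal_pow (inv_nonneg.mpr (s_pos n).le), ← ENNReal.ofReal_mul (by positivity)]
  have hterm : ∀ n : ℕ, ENNReal.ofReal ((b n)^2) * volume (closedBall (c n) ((s n)⁻¹)) ≤
      ENNReal.ofReal ((b n)^2 * ((s n)⁻¹)^2 * 4) := by
    intro n
    calc ENNReal.ofReal ((b n)^2) * volume (closedBall (c n) ((s n)⁻¹))
        ≤ ENNReal.ofReal ((b n)^2) * ENNReal.ofReal (((s n)⁻¹)^2 * 4) := by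
          gcongr; exact hvol n
      _ = ENNReal.ofReal ((b n)^2 * (((s n)⁻¹)^2 * 4)) :=
          (ENNReal.ofReal_mul (by positivity)).symm
      _ = ENNReal.ofReal ((b n)^2 * ((s n)⁻¹)^2 * 4) := by ring_nf
  have hfin : ∑' n, ENNReal.ofReal ((b n)^2) * volume (closedBall (c n) ((s n)⁻¹)) ≤
      ENNReal.ofReal (∑' n, (b n)^2 * ((s n)⁻¹)^2 * 4) := by
    calc ∑' n, ENNReal.ofReal ((b n)^2) * volume (closedBall (c n) ((s n)⁻¹))
        ≤ ∑' n, ENNReal.ofReal ((b n)^2 * ((s n)⁻¹)^2 * 4) := ENNReal.tsum_le_tsum hterm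
      _ = ENNReal.ofReal (∑' n, (b n)^2 * ((s n)⁻¹)^2 * 4) :=
          (ENNReal.ofReal_tsum_of_nonneg (fun n => by positivity)
            (by simpa [mul_comm] using hsum.mul_right 4)).symm
  exact ne_top_of_le_ne_top ENNReal.ofReal_ne_top hfin
/-! ### pointwise bounds for Zop and Zbarop -/

lemma norm_z_le {n : ℕ} {z : ℂ} (hz : z ∈ closedBall (c n) ((s n)⁻¹)) :
    ‖z‖ ≤ (n:ℝ) + 2 := by
  have h1 : ‖z - c n‖ ≤ (s n)⁻¹ := by
    rw [← dist_eq_norm]; exact mem_closedBall.mp hz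
  have hcn : ‖c n‖ ≤ (n:ℝ) + 3/2 := by
    rw [c]
    refine le_trans (norm_add_le _ _) ?_
    rw [Complex.norm_real, Real.norm_eq_abs, _root_.abs_of_nonneg (by positivity)]
    have hI : ‖Complex.I / 2‖ = 1/2 := by
      rw [norm_div, Complex.norm_I]; norm_num
    rw [hI]; linarith
  have hsn : (s n)⁻¹ ≤ 1/2 := le_trans (s_inv_le n) (by norm_num)
  calc ‖z‖ = ‖c n + (z - c n)‖ := by ring_nf
    _ ≤ ‖c n‖ + ‖z - c n‖ := norm_add_le _ _
    _ ≤ ((n:ℝ) + 3/2) + 1/2 := add_le_add hcn (le_trans h1 hsn)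
    _ = (n:ℝ) + 2 := by ring

lemma zero_case {n : ℕ} {z : ℂ} (hz : z ∉ closedBall (c n) ((s n)⁻¹))
    (hev : F =ᶠ[nhds z] g n) : F z = 0 ∧ fderiv ℝ F z = 0 := by
  have hev0 : F =ᶠ[nhds z] (0 : ℂ → ℂ) := hev.trans (g_eventually_zero hz)
  constructor
  · simpa using hev0.eq_of_nhds
  · rw [hev0.fderiv_eq]
    exact fderiv_const_apply 0

lemma Z_pointwise (z : ℂ) (σ u : ℂ) (hσ : ‖σ‖ = 1) (hu : ‖u‖ = ‖z‖) :
    ∃ n, ‖(fderiv ℝ F z 1 + σ * fderiv ℝ F z Complex.I) + (1/2 : ℂ) * u * F z‖ ≤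
      (closedBall (c n) ((s n)⁻¹)).indicator (fun _ => (2*Cb+1) * (a n * s n)) z := by
  obtain ⟨n, hFz, hDz, hev⟩ := F_norm_g z
  refine ⟨n, ?_⟩
  by_cases hz : z ∈ closedBall (c n) ((s n)⁻¹)
  · rw [Set.indicator_of_mem hz]
    have h1 : ‖fderiv ℝ F z 1‖ ≤ Cb * (a n * s n) := by
      rw [hDz]; simpa using g_fderiv_apply n z 1
    have h2 : ‖fderiv ℝ F z Complex.I‖ ≤ Cb * (a n * s n) := by
      rw [hDz]; simpa [Complex.norm_I] using g_fderiv_apply n z Complex.I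
    have h3 : ‖(1/2 : ℂ) * u * F z‖ ≤ (1/2) * (((n:ℝ) + 2) * a n) := by
      rw [norm_mul, norm_mul, hu]
      have hn1 : ‖(1/2 : ℂ)‖ = 1/2 := by norm_num
      rw [hn1]
      have hFn : ‖F z‖ ≤ a n := hFz ▸ g_norm_le n z
      have hzn : ‖z‖ ≤ (n:ℝ) + 2 := norm_z_le hz
      have := mul_le_mul hzn hFn (norm_nonneg _) (by positivity)
      nlinarith [norm_nonneg (F z), norm_nonneg z]
    calc ‖(fderiv ℝ F z 1 + σ * fderiv ℝ F z Complex.I) + (1/2 : ℂ) * u * F z‖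
        ≤ ‖fderiv ℝ F z 1 + σ * fderiv ℝ F z Complex.I‖ + ‖(1/2 : ℂ) * u * F z‖ :=
          norm_add_le _ _
      _ ≤ (‖fderiv ℝ F z 1‖ + ‖σ * fderiv ℝ F z Complex.I‖) + ‖(1/2 : ℂ) * u * F z‖ := by
          gcongr; exact norm_add_le _ _
      _ = (‖fderiv ℝ F z 1‖ + ‖fderiv ℝ F z Complex.I‖) + ‖(1/2 : ℂ) * u * F z‖ := by
          rw [norm_mul, hσ, one_mul]
      _ ≤ (Cb * (a n * s n) + Cb * (a n * s n)) + (1/2) * (((n:ℝ) + 2) * a n) := by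
          gcongr
      _ ≤ (2*Cb+1) * (a n * s n) := by
          nlinarith [add_two_le_s n, a_pos n, s_pos n, Cb_nonneg]
  · rw [Set.indicator_of_notMem hz]
    obtain ⟨hF0, hD0⟩ := zero_case hz hev
    rw [hF0, hD0]
    simp

lemma Zop_pointwise (z : ℂ) : ∃ n, ‖Zop F z‖ ≤
    (closedBall (c n) ((s n)⁻¹)).indicator (fun _ => (2*Cb+1) * (a n * s n)) z := by
  obtain ⟨n, h⟩ := Z_pointwise z (-Complex.I) ((starRingEnd ℂ) z)
    (by rw [norm_neg, Complex.norm_I]) (RCLike.norm_conj z)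
  refine ⟨n, ?_⟩
  have e : Zop F z = (fderiv ℝ F z 1 + (-Complex.I) * fderiv ℝ F z Complex.I) +
      (1/2 : ℂ) * ((starRingEnd ℂ) z) * F z := by
    simp only [Zop, pdz, pdx, pdy]; ring
  rw [e]; exact h

lemma Zbarop_pointwise (z : ℂ) : ∃ n, ‖Zbarop F z‖ ≤
    (closedBall (c n) ((s n)⁻¹)).indicator (fun _ => (2*Cb+1) * (a n * s n)) z := by
  obtain ⟨n, h⟩ := Z_pointwise z Complex.I (-z) Complex.norm_I (norm_neg z)
  refine ⟨n, ?_⟩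
  have e : Zbarop F z = (fderiv ℝ F z 1 + Complex.I * fderiv ℝ F z Complex.I) +
      (1/2 : ℂ) * (-z) * F z := by
    simp only [Zbarop, pdzbar, pdx, pdy]; ring
  rw [e]; exact h

lemma Zop_meas : AEStronglyMeasurable (Zop F) (volume : Measure ℂ) := by
  have m1 : Measurable fun z : ℂ => fderiv ℝ F z 1 := measurable_fderiv_apply_const ℝ F 1
  have m2 : Measurable fun z : ℂ => fderiv ℝ F z Complex.I :=
    measurable_fderiv_apply_const ℝ F Complex.I
  have mF : Measurable F := F_continuous.measurable
  have mconj : Measurable fun z : ℂ => (starRingEnd ℂ) z := Complex.continuous_conj.measurable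
  apply Measurable.aestronglyMeasurable
  have e : Zop F = fun z : ℂ => (fderiv ℝ F z 1 - Complex.I * fderiv ℝ F z Complex.I) +
      (1/2 : ℂ) * (starRingEnd ℂ) z * F z := rfl
  rw [e]
  exact (m1.sub (m2.const_mul Complex.I)).add ((mconj.const_mul (1/2 : ℂ)).mul mF)

lemma Zbarop_meas : AEStronglyMeasurable (Zbarop F) (volume : Measure ℂ) := by
  have m1 : Measurable fun z : ℂ => fderiv ℝ F z 1 := measurable_fderiv_apply_const ℝ F 1
  have m2 : Measurable fun z : ℂ => fderiv ℝ F z Complex.I :=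
    measurable_fderiv_apply_const ℝ F Complex.I
  have mF : Measurable F := F_continuous.measurable
  apply Measurable.aestronglyMeasurable
  have e : Zbarop F = fun z : ℂ => (fderiv ℝ F z 1 + Complex.I * fderiv ℝ F z Complex.I) -
      (1/2 : ℂ) * z * F z := rfl
  rw [e]
  exact (m1.add (m2.const_mul Complex.I)).sub ((measurable_id.const_mul (1/2 : ℂ)).mul mF)

lemma summable_a_sq : Summable (fun n => (a n)^2) := by
  have h0 : Summable (fun n : ℕ => 1 / ((n:ℝ))^2) :=
    Real.summable_one_div_nat_pow.mpr one_lt_two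
  have h1 := (summable_nat_add_iff 1).mpr h0
  refine h1.congr fun n => ?_
  rw [a]
  push_cast
  rw [div_pow, one_pow]

lemma summable_b_sq : Summable (fun n => ((2*Cb+1) * (a n * s n))^2 * ((s n)⁻¹)^2) := by
  have he : ∀ n, ((2*Cb+1) * (a n * s n))^2 * ((s n)⁻¹)^2 = (2*Cb+1)^2 * (a n)^2 := by
    intro n
    have hs := (s_pos n).ne'
    field_simp
  refine (summable_a_sq.mul_left ((2*Cb+1)^2)).congr fun n => (he n).symm
/-! ### amalgam norm facts -/

lemma F_at_c (n : ℕ) : F (c n) = ((a n : ℝ) : ℂ) := by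
  rw [F]
  congr 1
  rw [tsum_eq_single n]
  · rw [gr, sub_self, smul_zero, phi0, mul_one]
  · intro m hm
    apply gr_zero_of_far
    calc (s m)⁻¹ ≤ 4⁻¹ := s_inv_le m
    _ ≤ 1 := by norm_num
    _ ≤ dist (c n) (c m) := dist_c (Ne.symm hm)

lemma c_mem_cell (n : ℕ) : c n ∈ cell ((n:ℤ), (0:ℤ)) := by
  have hre : (c n).re = (n:ℝ) + 1/2 := by
    simp [c, Complex.add_re, Complex.div_re]
  have him : (c n).im = 1/2 := by
    simp [c, Complex.add_im, Complex.div_im]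
  constructor
  · rw [hre]
    constructor <;> [skip; skip] <;> push_cast <;> linarith
  · rw [him]
    constructor <;> push_cast <;> norm_num

lemma not_summable_amalgam : ¬ Summable (amalgamNorm F) := by
  intro hs
  have hinj : Function.Injective (fun n : ℕ => (((n:ℤ), (0:ℤ)) : ℤ × ℤ)) := by
    intro m n h
    have h1 : ((m:ℤ), (0:ℤ)).1 = ((n:ℤ), (0:ℤ)).1 := congrArg Prod.fst h
    simp only at h1
    exact_mod_cast h1
  have h2 : Summable fun n : ℕ => amalgamNorm F (((n:ℤ), (0:ℤ))) := hs.comp_injective hinj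
  have hle : ∀ n : ℕ, a n ≤ amalgamNorm F ((n:ℤ), (0:ℤ)) := by
    intro n
    have hmem : ‖F (c n)‖ ∈ (fun z => ‖F z‖) '' cell ((n:ℤ), (0:ℤ)) :=
      ⟨c n, c_mem_cell n, rfl⟩
    have hbdd : BddAbove ((fun z => ‖F z‖) '' cell ((n:ℤ), (0:ℤ))) :=
      ⟨1, by rintro y ⟨z, -, rfl⟩; exact F_norm_le_one z⟩
    have h := le_csSup hbdd hmem
    rwa [F_at_c, Complex.norm_real, Real.norm_eq_abs, _root_.abs_of_pos (a_pos n)] at h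
  have h3 : Summable a := Summable.of_nonneg_of_le (fun n => (a_pos n).le) hle h2
  have h4 : Summable (fun n : ℕ => 1 / ((n:ℝ))) := by
    rw [← summable_nat_add_iff 1]
    refine h3.congr fun n => ?_
    rw [a]; push_cast; ring
  exact Real.not_summable_one_div_natCast h4

lemma memL2_F : MemLp F 2 (volume : Measure ℂ) := by
  refine memL2' F F_continuous.aestronglyMeasurable a (fun z => ?_) ?_
  · obtain ⟨n, hFz, -, -⟩ := F_norm_g z
    refine ⟨n, ?_⟩
    by_cases hz : z ∈ closedBall (c n) ((s n)⁻¹)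
    · rw [Set.indicator_of_mem hz, hFz]
      exact g_norm_le n z
    · rw [Set.indicator_of_notMem hz]
      have hfar : (s n)⁻¹ ≤ dist z (c n) :=
        le_of_lt (by simpa [Metric.mem_closedBall, not_le] using hz)
      have : gr n z = 0 := gr_zero_of_far hfar
      rw [hFz, g, this]
      simp
  · refine Summable.of_nonneg_of_le (fun n => by positivity) (fun n => ?_) summable_a_sq
    have h1 : ((s n)⁻¹)^2 ≤ 1 := by
      have := s_inv_le n
      nlinarith [inv_nonneg.mpr (s_pos n).le]
    nlinarith [sq_nonneg (a n)]

lemma memL2_Zop : MemLp (Zop F) 2 (volume : Measure ℂ) :=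
  memL2' _ Zop_meas _ Zop_pointwise summable_b_sq

lemma memL2_Zbarop : MemLp (Zbarop F) 2 (volume : Measure ℂ) :=
  memL2' _ Zbarop_meas _ Zbarop_pointwise summable_b_sq

end S14

-- STATEMENT 14
theorem stmt14 :
    ∃ f : ℂ → ℂ, Continuous f ∧ (∀ z, (f z).im = 0) ∧
      MemLp f 2 (volume : Measure ℂ) ∧
      (∀ᵐ z : ℂ, DifferentiableAt ℝ f z) ∧
      MemLp (Zop f) 2 (volume : Measure ℂ) ∧
      MemLp (Zbarop f) 2 (volume : Measure ℂ) ∧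
      ¬ Summable (amalgamNorm f) := by
  exact ⟨S14.F, S14.F_continuous, fun z => Complex.ofReal_im _,
    S14.memL2_F, MeasureTheory.ae_of_all _ S14.F_differentiable,
    S14.memL2_Zop, S14.memL2_Zbarop, S14.not_summable_amalgam⟩
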